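/- Let V be a finite-dimensional real vector space and Q a nondegenerate quadratic form on V. Let M be a finite-dimensional Cℓ(Q)-module and h a nondegenerate bilinear form on M. If S₀ ⊆ M is a linear subspace with 4·dim S₀ > 3·dim M, then the only vector v ∈ V satisfying h(γ_v s, t) = 0 for all s, t ∈ S₀ is v = 0. (This is the algebraic core of Theorem 2.1 (i)–(ii): a subspace of dimension greater than 3/4 of the spinor module admits no nonzero vector v with γ_v S₀ ⊆ S₀^⊥.) -/

import Mathlib

/-- The Clifford multiplication `γ_v : s ↦ ι(v) • s` as an `ℝ`-linear endomorphism
of a `Cℓ(Q)`-module `M`. -/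
noncomputable def gammaLin {V : Type*} [AddCommGroup V] [Module ℝ V]
    (Q : QuadraticForm ℝ V) {M : Type*} [AddCommGroup M] [Module ℝ M]
    [Module (CliffordAlgebra Q) M] [IsScalarTower ℝ (CliffordAlgebra Q) M]
    (v : V) : M →ₗ[ℝ] M where
  toFun s := CliffordAlgebra.ι Q v • s
  map_add' s t := smul_add _ s t
  map_smul' r s := (smul_comm r (CliffordAlgebra.ι Q v) s).symm

/-- If `S₀` is a subspace of a Clifford module `M` with `dim S₀ > (3/4) dim M`
(for `Q` nondegenerate and `h` a nondegenerate bilinear form on `M`), then the only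
vector `v` with `h(γ_v S₀, S₀) = 0` is `v = 0`. -/
theorem killing_spinors_three_quarters
    {V : Type*} [AddCommGroup V] [Module ℝ V] [FiniteDimensional ℝ V]
    (Q : QuadraticForm ℝ V) (hQ : (QuadraticMap.polarBilin Q).Nondegenerate)
    {M : Type*} [AddCommGroup M] [Module ℝ M] [FiniteDimensional ℝ M]
    [Module (CliffordAlgebra Q) M] [IsScalarTower ℝ (CliffordAlgebra Q) M]
    (h : LinearMap.BilinForm ℝ M) (hh : h.Nondegenerate)
    (S₀ : Submodule ℝ M)
    (hdim : 3 * Module.finrank ℝ M < 4 * Module.finrank ℝ S₀)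
    (v : V)
    (hv : ∀ s ∈ S₀, ∀ t ∈ S₀, h (gammaLin Q v s) t = 0) :
    v = 0 := by
  by_contra hv0
  set γ := gammaLin Q (M := M) v with hγ
  -- step A: 2 * finrank (ker γ) ≤ finrank M
  have hγγ : ∀ x : M, γ (γ x) = Q v • x := by
    intro x
    show CliffordAlgebra.ι Q v • CliffordAlgebra.ι Q v • x = Q v • x
    rw [smul_smul, CliffordAlgebra.ι_sq_scalar, algebraMap_smul]
  have hker : 2 * Module.finrank ℝ (LinearMap.ker γ) ≤ Module.finrank ℝ M := by
    by_cases hQv : Q v = 0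
    · -- get w with polar ≠ 0
      obtain ⟨w, hw⟩ : ∃ w, QuadraticMap.polar Q v w ≠ 0 := by
        by_contra hc
        push_neg at hc
        exact hv0 (hQ.1 v (fun n => hc n))
      set c := QuadraticMap.polar Q v w with hc
      have hanti : ∀ x : M, γ (gammaLin Q w x) + gammaLin Q w (γ x) = c • x := by
        intro x
        show CliffordAlgebra.ι Q v • CliffordAlgebra.ι Q w • x
            + CliffordAlgebra.ι Q w • CliffordAlgebra.ι Q v • x = c • x
        rw [smul_smul, smul_smul, ← add_smul, CliffordAlgebra.ι_mul_ι_add_swap,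
          algebraMap_smul]
      have hsub : LinearMap.ker γ ≤ LinearMap.range γ := by
        intro x hx
        rw [LinearMap.mem_ker] at hx
        refine ⟨c⁻¹ • gammaLin Q w x, ?_⟩
        have := hanti x
        rw [hx, map_zero, add_zero] at this
        rw [map_smul, this, smul_smul, inv_mul_cancel₀ hw, one_smul]
      have h1 := LinearMap.finrank_range_add_finrank_ker γ
      have h2 := Submodule.finrank_mono hsub
      omega
    · have : LinearMap.ker γ = ⊥ := by
        rw [LinearMap.ker_eq_bot']
        intro x hx
        have := hγγ x
        rw [hx, map_zero] at this
        have := this.symm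
        rwa [smul_eq_zero_iff_right hQv] at this
      rw [this, finrank_bot]
      omega
  -- step B: map γ S₀ ≤ Sann, finrank Sann + finrank S₀ = finrank M
  set Sann := S₀.dualAnnihilator.map ((h.toDual hh).symm : Module.Dual ℝ M →ₗ[ℝ] M) with hSann
  have hmemSann : ∀ x : M, x ∈ Sann ↔ ∀ t ∈ S₀, h x t = 0 := by
    intro x
    constructor
    · rintro ⟨φ, hφ, rfl⟩ t ht
      have : h ((h.toDual hh).symm φ) t = (h.toDual hh) ((h.toDual hh).symm φ) t := by
        rw [LinearMap.BilinForm.toDual_def]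
      rw [LinearEquiv.coe_coe, this, LinearEquiv.apply_symm_apply]
      exact (Submodule.mem_dualAnnihilator φ).mp hφ t ht
    · intro hx
      have hmem : (h.toDual hh) x ∈ S₀.dualAnnihilator := by
        rw [Submodule.mem_dualAnnihilator]
        intro t ht
        rw [LinearMap.BilinForm.toDual_def]
        exact hx t ht
      exact ⟨(h.toDual hh) x, hmem, LinearEquiv.symm_apply_apply _ _⟩
  have hSannrank : Module.finrank ℝ Sann + Module.finrank ℝ S₀ = Module.finrank ℝ M := by
    have e1 : Module.finrank ℝ Sann = Module.finrank ℝ S₀.dualAnnihilator :=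
      (LinearEquiv.finrank_map_eq (h.toDual hh).symm S₀.dualAnnihilator).symm ▸ rfl
    have e2 : Module.finrank ℝ S₀.dualAnnihilator = Module.finrank ℝ (M ⧸ S₀) :=
      ((Subspace.quotEquivAnnihilator S₀).finrank_eq).symm
    have e3 := Submodule.finrank_quotient_add_finrank S₀
    rw [e1, e2]
    exact e3
  have hmap : S₀.map γ ≤ Sann := by
    rintro x ⟨s, hs, rfl⟩
    rw [hmemSann]
    intro t ht
    exact hv s hs t ht
  -- step C: finrank (map γ S₀) + finrank (ker γ) ≥ finrank S₀
  have hC : Module.finrank ℝ S₀ ≤ Module.finrank ℝ (S₀.map γ) + Module.finrank ℝ (LinearMap.ker γ) := by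
    set f := γ.comp S₀.subtype with hf
    have hrange : LinearMap.range f = S₀.map γ := by
      rw [hf, LinearMap.range_comp, Submodule.range_subtype]
    have h1 : Module.finrank ℝ (LinearMap.range f) + Module.finrank ℝ (LinearMap.ker f) = Module.finrank ℝ S₀ :=
      LinearMap.finrank_range_add_finrank_ker f
    have h2 : Module.finrank ℝ (LinearMap.ker f) ≤ Module.finrank ℝ (LinearMap.ker γ) := by
      have hle : (LinearMap.ker f).map S₀.subtype ≤ LinearMap.ker γ := by
        rintro x ⟨y, hy, rfl⟩
        simp only [SetLike.mem_coe, LinearMap.mem_ker] at hy ⊢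
        exact hy
      have := Submodule.finrank_mono hle
      rwa [Submodule.finrank_map_subtype_eq] at this
    rw [hrange] at h1
    omega
  have hmaprank := Submodule.finrank_mono hmap
  omega
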